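/- Existence of the concave comparison function for the reflection coupling: Let κ : (0, ∞) → ℝ be continuous, bounded from below, and asymptotically positive in the sense that liminf_{r→∞} κ(r) > 0. Then there exist a function f : [0, ∞) → [0, ∞) and constants c₀ > 0 and φ₀ > 0 such that: (1) f(0) = 0 and f is concave and strictly increasing on [0, ∞); (2) f is twice continuously differentiable on [0, ∞) and f''(r) − (1/4) r κ(r) f'(r) ≤ −(c₀/2) f(r) for all r > 0; (3) (φ₀/4) r ≤ f(r) ≤ r for all r ≥ 0. -/

import Mathlib

open Real Filter Set

set_option maxHeartbeats 1000000


/-- **Existence of the concave comparison function for the reflection coupling.**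
If `κ : (0,∞) → ℝ` is continuous, bounded from below and has `liminf_{r→∞} κ(r) > 0`,
then there exist a function `f : [0,∞) → [0,∞)` (given with its first and second
derivatives `f'`, `f''` on `[0,∞)`) and constants `c₀, φ₀ > 0` such that `f(0) = 0`,
`f` is concave and strictly increasing on `[0,∞)`, `f` is twice continuously
differentiable on `[0,∞)`, `f''(r) − (1/4) r κ(r) f'(r) ≤ −(c₀/2) f(r)` for all `r > 0`,
and `(φ₀/4) r ≤ f(r) ≤ r` for all `r ≥ 0`. -/
theorem exists_reflection_coupling_comparison_function (κ : ℝ → ℝ)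
    (hcont : ContinuousOn κ (Set.Ioi 0))
    (hbdd : BddBelow (κ '' Set.Ioi 0))
    (hliminf : 0 < Filter.liminf κ Filter.atTop) :
    ∃ (f f' f'' : ℝ → ℝ) (c₀ φ₀ : ℝ), 0 < c₀ ∧ 0 < φ₀ ∧
      f 0 = 0 ∧
      StrictMonoOn f (Set.Ici 0) ∧
      ConcaveOn ℝ (Set.Ici 0) f ∧
      (∀ r ∈ Set.Ici (0 : ℝ), HasDerivWithinAt f (f' r) (Set.Ici 0) r) ∧
      (∀ r ∈ Set.Ici (0 : ℝ), HasDerivWithinAt f' (f'' r) (Set.Ici 0) r) ∧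
      ContinuousOn f'' (Set.Ici 0) ∧
      (∀ r : ℝ, 0 < r → f'' r - 1 / 4 * r * κ r * f' r ≤ -(c₀ / 2) * f r) ∧
      (∀ r : ℝ, 0 ≤ r → φ₀ / 4 * r ≤ f r ∧ f r ≤ r) := by
  -- lower bound on κ
  obtain ⟨m₀, hm₀⟩ := hbdd
  obtain ⟨M, hMdef⟩ : ∃ M : ℝ, M = max 0 (-m₀) := ⟨_, rfl⟩
  have hM : 0 ≤ M := hMdef ▸ le_max_left _ _
  have hκM : ∀ r : ℝ, 0 < r → -M ≤ κ r := by
    intro r hr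
    have h1 : m₀ ≤ κ r := hm₀ ⟨r, hr, rfl⟩
    have h2 : -m₀ ≤ M := hMdef ▸ le_max_right _ _
    linarith
  -- eventual positivity of κ
  have hS : {b : ℝ | ∀ᶠ r in atTop, b ≤ κ r}.Nonempty :=
    ⟨m₀, (eventually_gt_atTop 0).mono fun r hr => hm₀ ⟨r, hr, rfl⟩⟩
  rw [Filter.liminf_eq] at hliminf
  obtain ⟨δ, hδS, hδ⟩ := exists_lt_of_lt_csSup hS hliminf
  obtain ⟨R₀, hR₀⟩ := eventually_atTop.mp hδS
  obtain ⟨R, hRdef⟩ : ∃ R : ℝ, R = max R₀ 1 := ⟨_, rfl⟩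
  have hR1 : (1:ℝ) ≤ R := hRdef ▸ le_max_right _ _
  have hRpos : (0:ℝ) < R := by linarith
  have hκδ : ∀ r : ℝ, R ≤ r → δ ≤ κ r := fun r hr =>
    hR₀ r (le_trans (hRdef ▸ le_max_left _ _) hr)
  -- constants
  obtain ⟨a, hadef⟩ : ∃ a : ℝ, a = M * R / 4 + 1 := ⟨_, rfl⟩
  have hMR : 0 ≤ M * R := mul_nonneg hM hRpos.le
  have ha1 : (1:ℝ) ≤ a := by rw [hadef]; linarith
  have hapos : (0:ℝ) < a := by linarith
  obtain ⟨η, hηdef⟩ : ∃ η : ℝ, η = Real.exp (-(a * R)) := ⟨_, rfl⟩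
  have hηpos : 0 < η := hηdef ▸ Real.exp_pos _
  have hη1 : η ≤ 1 := hηdef ▸ Real.exp_le_one_iff.mpr (by nlinarith)
  have hMR2 : (0:ℝ) < M * R + 2 := by nlinarith
  obtain ⟨ε, hεdef⟩ : ∃ ε : ℝ, ε = 2 * η / (M * R + 2) := ⟨_, rfl⟩
  have hεpos : 0 < ε := by rw [hεdef]; positivity
  have hεMR : ε * (M * R + 2) = 2 * η := by
    rw [hεdef]; field_simp
  have hε1 : ε ≤ 1 := by nlinarith
  obtain ⟨c₀, hc₀def⟩ : ∃ c₀ : ℝ,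
      c₀ = min (min (η / (2 * R)) (δ * ε * R / 4)) (δ / 4) := ⟨_, rfl⟩
  have hc₀pos : 0 < c₀ := by
    rw [hc₀def]
    exact lt_min (lt_min (by positivity) (by positivity)) (by positivity)
  have hc1 : c₀ * (2 * R) ≤ η := by
    calc c₀ * (2 * R) ≤ η / (2 * R) * (2 * R) :=
          mul_le_mul_of_nonneg_right
            (hc₀def ▸ le_trans (min_le_left _ _) (min_le_left _ _)) (by positivity)
      _ = η := by field_simp
  have hc2 : c₀ ≤ δ * ε * R / 4 :=
    hc₀def ▸ le_trans (min_le_left _ _) (min_le_right _ _)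
  have hc3 : c₀ ≤ δ / 4 := hc₀def ▸ min_le_right _ _
  obtain ⟨β, hβdef⟩ : ∃ β : ℝ, β = 1 / (1 + ε) := ⟨_, rfl⟩
  have hβpos : 0 < β := by rw [hβdef]; positivity
  have hβε : β * (1 + ε) = 1 := by rw [hβdef]; field_simp
  -- the function and its derivatives
  obtain ⟨f, hfdef⟩ : ∃ f : ℝ → ℝ,
      f = fun r => β * ((1 - Real.exp (-(a * r))) / a + ε * r) := ⟨_, rfl⟩
  obtain ⟨f', hf'def⟩ : ∃ f' : ℝ → ℝ,
      f' = fun r => β * (Real.exp (-(a * r)) + ε) := ⟨_, rfl⟩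
  obtain ⟨f'', hf''def⟩ : ∃ f'' : ℝ → ℝ,
      f'' = fun r => -(β * a) * Real.exp (-(a * r)) := ⟨_, rfl⟩
  have hexp : ∀ r : ℝ, HasDerivAt (fun x => Real.exp (-(a * x)))
      (-a * Real.exp (-(a * r))) r := by
    intro r
    have h1 : HasDerivAt (fun x : ℝ => -(a * x)) (-a) r := by
      simpa using (hasDerivAt_id r).const_mul (-a)
    simpa [mul_comm] using h1.exp
  have hfd : ∀ r : ℝ, HasDerivAt f (f' r) r := by
    intro r
    have h2 := (((hasDerivAt_const r (1:ℝ)).sub (hexp r)).div_const a).add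
      ((hasDerivAt_id r).const_mul ε)
    have h3 := h2.const_mul β
    rw [hfdef, hf'def]
    refine h3.congr_deriv ?_
    beta_reduce
    field_simp
    ring
  have hf'd : ∀ r : ℝ, HasDerivAt f' (f'' r) r := by
    intro r
    have h2 := ((hexp r).add_const ε).const_mul β
    rw [hf'def, hf''def]
    refine h2.congr_deriv ?_
    beta_reduce
    ring
  -- exponential bounds
  have hEbound : ∀ r : ℝ, 0 ≤ r →
      Real.exp (-(a * r)) ≤ 1 ∧ 1 - Real.exp (-(a * r)) ≤ a * r := by
    intro r hr
    constructor
    · exact Real.exp_le_one_iff.mpr (by nlinarith)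
    · nlinarith [Real.add_one_le_exp (-(a * r))]
  refine ⟨f, f', f'', c₀, 4 * (β * ε), hc₀pos, by positivity, ?_, ?_, ?_,
    fun r _ => (hfd r).hasDerivWithinAt, fun r _ => (hf'd r).hasDerivWithinAt, ?_, ?_, ?_⟩
  · simp [hfdef]
  · -- StrictMonoOn
    intro x _ y _ hxy
    have hE : Real.exp (-(a * y)) < Real.exp (-(a * x)) :=
      Real.exp_lt_exp.mpr (by nlinarith)
    rw [hfdef]
    simp only []
    have h1 : (1 - Real.exp (-(a * x))) / a ≤ (1 - Real.exp (-(a * y))) / a :=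
      (div_le_div_iff_of_pos_right hapos).mpr (by linarith)
    exact mul_lt_mul_of_pos_left (add_lt_add_of_le_of_lt h1 (by nlinarith)) hβpos
  · -- ConcaveOn
    have hdf : deriv f = f' := funext fun r => (hfd r).deriv
    refine concaveOn_of_deriv2_nonpos (convex_Ici 0)
      (fun r _ => (hfd r).continuousAt.continuousWithinAt)
      (fun r _ => (hfd r).differentiableAt.differentiableWithinAt) ?_ ?_
    · rw [hdf]
      exact fun r _ => (hf'd r).differentiableAt.differentiableWithinAt
    · intro r _
      show deriv (deriv f) r ≤ 0
      rw [hdf, (hf'd r).deriv]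
      simp only [hf''def]
      nlinarith [Real.exp_pos (-(a * r)), mul_pos hβpos hapos]
  · -- continuity of f''
    rw [hf''def]
    fun_prop
  · -- the differential inequality
    intro r hr
    rw [hfdef, hf'def, hf''def]
    simp only []
    obtain ⟨hE1, hE2⟩ := hEbound r hr.le
    set E : ℝ := Real.exp (-(a * r)) with hEdef
    have hEpos : 0 < E := Real.exp_pos _
    set D : ℝ := (1 - E) / a with hDdef
    have hD0 : 0 ≤ D := div_nonneg (by linarith) hapos.le
    have hDr : D ≤ r := by rw [hDdef, div_le_iff₀ hapos]; nlinarith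
    have hD1 : D ≤ 1 := by rw [hDdef, div_le_one hapos]; nlinarith
    have key : -(a * E) - 1 / 4 * r * κ r * (E + ε) ≤ -(c₀ / 2) * (D + ε * r) := by
      rcases le_or_gt r R with hrR | hrR
      · -- small r
        have hκ : -M ≤ κ r := hκM r hr
        have hEη : η ≤ E := by
          rw [hEdef, hηdef]
          exact Real.exp_le_exp.mpr (by nlinarith)
        have hL : -(a * E) - 1 / 4 * r * κ r * (E + ε) ≤ -(η / 2) := by
          nlinarith [mul_nonneg (by linarith : (0:ℝ) ≤ κ r + M)
              (mul_nonneg hr.le (by positivity : (0:ℝ) ≤ E + ε)),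
            mul_nonneg (by linarith : (0:ℝ) ≤ E - η)
              (by nlinarith : (0:ℝ) ≤ a - M * r / 4),
            mul_nonneg hηpos.le (mul_nonneg hM (by linarith : (0:ℝ) ≤ R - r)),
            mul_nonneg hM (mul_nonneg hεpos.le (by linarith : (0:ℝ) ≤ R - r))]
        have hR' : -(η / 2) ≤ -(c₀ / 2) * (D + ε * r) := by
          nlinarith [mul_nonneg hc₀pos.le (by linarith : (0:ℝ) ≤ r - D),
            mul_nonneg hc₀pos.le (mul_nonneg (by linarith : (0:ℝ) ≤ 1 - ε) hr.le),
            mul_nonneg hc₀pos.le (by linarith : (0:ℝ) ≤ R - r)]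
        linarith
      · -- large r
        have hκ : δ ≤ κ r := hκδ r hrR.le
        nlinarith [mul_nonneg (by linarith : (0:ℝ) ≤ κ r - δ)
            (mul_nonneg hr.le (by positivity : (0:ℝ) ≤ E + ε)),
          mul_nonneg hapos.le hEpos.le,
          mul_nonneg hδ.le (mul_nonneg hr.le hEpos.le),
          mul_nonneg hc₀pos.le (by linarith : (0:ℝ) ≤ 1 - D),
          mul_nonneg (by linarith : (0:ℝ) ≤ δ / 8 - c₀ / 2)
            (mul_nonneg hεpos.le (by linarith : (0:ℝ) ≤ r)),
          mul_nonneg hδ.le (mul_nonneg hεpos.le (by linarith : (0:ℝ) ≤ r - R))]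
    nlinarith [mul_le_mul_of_nonneg_left key hβpos.le]
  · -- bounds
    intro r hr
    rw [hfdef]
    simp only []
    obtain ⟨hE1, hE2⟩ := hEbound r hr
    have hEpos : 0 < Real.exp (-(a * r)) := Real.exp_pos _
    have hD0 : 0 ≤ (1 - Real.exp (-(a * r))) / a := div_nonneg (by linarith) hapos.le
    have hDr : (1 - Real.exp (-(a * r))) / a ≤ r := by
      rw [div_le_iff₀ hapos]; nlinarith
    constructor
    · nlinarith [mul_nonneg hβpos.le hD0]
    · have h1 : β * ((1 - Real.exp (-(a * r))) / a + ε * r) ≤ β * (r + ε * r) := by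
        apply mul_le_mul_of_nonneg_left _ hβpos.le
        linarith
      have h2 : β * (r + ε * r) = r := by
        have h3 : β * (r + ε * r) = β * (1 + ε) * r := by ring
        rw [h3, hβε, one_mul]
      linarith
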